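/- Let C be an [m,k]-linear code over a finite field with generator matrix A, and let M = M[A] be the vector matroid of A on E = {1,…,m} with nullity η*. Then the r-th generalized Hamming weight of C satisfies δ_r(C) = min{|X| : X ⊆ E and η*(X) ≥ r} for 1 ≤ r ≤ k, where η* is the nullity of the dual matroid M*. -/

import Mathlib

open Set

/-- The support of a subcode: the coordinates where some codeword is nonzero. -/
noncomputable def codeSupport {ι F : Type*} [Field F] (D : Submodule F (ι → F)) : Set ι :=
  {i | ∃ v ∈ D, v i ≠ 0}

/-- The `r`-th generalized Hamming weight of a linear code `C`. -/
noncomputable def GHW {ι F : Type*} [Field F] (C : Submodule F (ι → F)) (r : ℕ) : ℕ :=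
  sInf {n | ∃ D : Submodule F (ι → F), D ≤ C ∧ Module.finrank F D = r ∧
    (codeSupport D).ncard = n}

/-- The rank of the set `X` of columns of the matrix `A`. -/
noncomputable def colRankM {k m : ℕ} {F : Type*} [Field F]
    (A : Matrix (Fin k) (Fin m) F) (X : Set (Fin m)) : ℕ :=
  Module.finrank F (Submodule.span F ((fun j => fun i => A i j) '' X))

/-- The rank function of the dual of the vector matroid of `A`. -/
noncomputable def dualRank {k m : ℕ} {F : Type*} [Field F]
    (A : Matrix (Fin k) (Fin m) F) (X : Set (Fin m)) : ℕ :=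
  X.ncard + colRankM A (Set.univ \ X) - colRankM A Set.univ

/-- The nullity function of the dual of the vector matroid of `A`. -/
noncomputable def dualNullity {k m : ℕ} {F : Type*} [Field F]
    (A : Matrix (Fin k) (Fin m) F) (X : Set (Fin m)) : ℕ :=
  X.ncard - dualRank A X

/-! ### Auxiliary material -/

/-- In a finite dimensional situation, any submodule `W` contains a submodule of any
dimension `r ≤ finrank W`. -/
lemma exists_le_finrank_eq {F V : Type*} [Field F] [AddCommGroup V] [Module F V]
    (W : Submodule F V) [FiniteDimensional F W] {r : ℕ} (hr : r ≤ Module.finrank F W) :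
    ∃ D : Submodule F V, D ≤ W ∧ Module.finrank F D = r := by
  let b := Module.finBasis F W
  let f : Fin r → V := fun i => (b (Fin.castLE hr i) : V)
  have hli : LinearIndependent F f := by
    have h1 : LinearIndependent F (fun i : Fin r => b (Fin.castLE hr i)) :=
      b.linearIndependent.comp _ (Fin.castLE_injective hr)
    exact h1.map' W.subtype W.ker_subtype
  refine ⟨Submodule.span F (Set.range f), ?_, ?_⟩
  · rw [Submodule.span_le]
    rintro x ⟨i, rfl⟩
    exact (b (Fin.castLE hr i)).2
  · rw [finrank_span_eq_card hli, Fintype.card_fin]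

/-- The submodule of vectors supported inside `X`. -/
noncomputable def kerProj {m : ℕ} (F : Type*) [Field F] (X : Set (Fin m)) :
    Submodule F (Fin m → F) :=
  LinearMap.ker (LinearMap.funLeft F F (Subtype.val : ↥(Set.univ \ X) → Fin m))

lemma mem_kerProj {m : ℕ} {F : Type*} [Field F] {X : Set (Fin m)} {v : Fin m → F} :
    v ∈ kerProj F X ↔ ∀ j ∈ Set.univ \ X, v j = 0 := by
  simp only [kerProj, LinearMap.mem_ker, LinearMap.funLeft_apply]
  constructor
  · intro h j hj
    exact congrFun h ⟨j, hj⟩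
  · intro h
    funext j
    exact h j j.2

section Matrix

variable {m k : ℕ} {F : Type*} [Field F] (A : Matrix (Fin k) (Fin m) F)

lemma colRank_eq_rank (X : Set (Fin m)) [Fintype X] :
    colRankM A X = (A.submatrix id (Subtype.val : ↥X → Fin m)).rank := by
  rw [Matrix.rank_eq_finrank_span_cols, colRankM]
  have h : Set.range ((A.submatrix id (Subtype.val : ↥X → Fin m)).transpose)
      = (fun j => fun i => A i j) '' X := by
    ext w
    simp only [Set.mem_range, Set.mem_image]
    constructor
    · rintro ⟨j, rfl⟩; exact ⟨j, j.2, rfl⟩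
    · rintro ⟨j, hj, rfl⟩; exact ⟨⟨j, hj⟩, rfl⟩
  rw [show Set.range (A.submatrix id (Subtype.val : ↥X → Fin m)).col = _ from h]

lemma colRank_univ (hk : Module.finrank F (Submodule.span F (Set.range A)) = k) :
    colRankM A Set.univ = k := by
  have h1 : colRankM A Set.univ = A.rank := by
    rw [Matrix.rank_eq_finrank_span_cols, colRankM, Set.image_univ]
    rfl
  rw [h1, Matrix.rank_eq_finrank_span_row]
  exact hk

lemma colRank_le_ncard (X : Set (Fin m)) : colRankM A X ≤ X.ncard := by
  haveI : Fintype ↥((fun j => fun i => A i j) '' X) := Fintype.ofFinite _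
  refine le_trans (finrank_span_le_card _) ?_
  rw [← Set.ncard_eq_toFinset_card']
  exact Set.ncard_image_le X.toFinite

lemma colRank_subadd (X : Set (Fin m)) :
    colRankM A Set.univ ≤ colRankM A X + colRankM A (Set.univ \ X) := by
  simp only [colRankM]
  have hu : (X ∪ (Set.univ \ X)) = (Set.univ : Set (Fin m)) := Set.union_diff_cancel (Set.subset_univ X)
  have hle : Submodule.span F ((fun j => fun i => A i j) '' Set.univ)
      ≤ Submodule.span F ((fun j => fun i => A i j) '' X)
        ⊔ Submodule.span F ((fun j => fun i => A i j) '' (Set.univ \ X)) := by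
    rw [← Submodule.span_union, ← Set.image_union, hu]
  exact le_trans (Submodule.finrank_mono hle) (Submodule.finrank_add_le_finrank_add_finrank _ _)

lemma finrank_inf_kerProj (hk : Module.finrank F (Submodule.span F (Set.range A)) = k)
    (X : Set (Fin m)) :
    colRankM A (Set.univ \ X)
      + Module.finrank F ↥(Submodule.span F (Set.range A) ⊓ kerProj F X) = k := by
  set C := Submodule.span F (Set.range A) with hC
  set Y := Set.univ \ X with hY
  haveI : Fintype ↥Y := Fintype.ofFinite _
  set ψ : (Fin m → F) →ₗ[F] (↥Y → F) := LinearMap.funLeft F F Subtype.val with hψ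
  set B := A.submatrix id (Subtype.val : ↥Y → Fin m) with hB
  have hcomp : ψ ∘ₗ A.vecMulLinear = B.vecMulLinear := by
    apply LinearMap.ext
    intro x
    funext j
    simp only [LinearMap.comp_apply, Matrix.vecMulLinear_apply, hψ, LinearMap.funLeft_apply,
      Function.comp_apply, Matrix.vecMul, hB, Matrix.submatrix_apply]
    rfl
  have e1 : Module.finrank F ↥(LinearMap.range (ψ ∘ₗ C.subtype))
      + Module.finrank F ↥(LinearMap.ker (ψ ∘ₗ C.subtype)) = k := by
    rw [← hk]
    exact LinearMap.finrank_range_add_finrank_ker _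
  have e2 : LinearMap.range (ψ ∘ₗ C.subtype) = LinearMap.range B.vecMulLinear := by
    rw [← hcomp, LinearMap.range_comp, LinearMap.range_comp, range_vecMulLinear,
      Submodule.range_subtype]
    rfl
  have e3 : Module.finrank F ↥(LinearMap.range B.vecMulLinear) = colRankM A Y := by
    rw [range_vecMulLinear, colRank_eq_rank A Y, ← Matrix.rank_transpose,
      Matrix.rank_eq_finrank_span_cols, Matrix.col_transpose, hB]
  have e4 : Module.finrank F ↥(LinearMap.ker (ψ ∘ₗ C.subtype))
      = Module.finrank F ↥(C ⊓ kerProj F X) := by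
    have hker : LinearMap.ker (ψ ∘ₗ C.subtype) = Submodule.comap C.subtype (C ⊓ kerProj F X) := by
      rw [LinearMap.ker_comp, Submodule.comap_inf, Submodule.comap_subtype_self, top_inf_eq]
      rfl
    rw [hker]
    exact (Submodule.comapSubtypeEquivOfLe inf_le_left).finrank_eq
  rw [e2, e3, e4] at e1
  exact e1

lemma dualNullity_eq_finrank (hk : Module.finrank F (Submodule.span F (Set.range A)) = k)
    (X : Set (Fin m)) :
    dualNullity A X = Module.finrank F ↥(Submodule.span F (Set.range A) ⊓ kerProj F X) := by
  have h1 := finrank_inf_kerProj A hk X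
  have h2 := colRank_univ A hk
  have h3 := colRank_le_ncard A X
  have h4 := colRank_subadd A X
  simp only [dualNullity, dualRank]
  omega

end Matrix

theorem stmt2 {m k : ℕ} {F : Type*} [Field F] [Fintype F]
    (A : Matrix (Fin k) (Fin m) F) (C : Submodule F (Fin m → F))
    (hC : C = Submodule.span F (Set.range A)) (hk : Module.finrank F C = k)
    (r : ℕ) (hr : 1 ≤ r) (hrk : r ≤ k) :
    GHW C r = sInf {n | ∃ X : Set (Fin m), r ≤ dualNullity A X ∧ X.ncard = n} := by
  subst hC
  set C := Submodule.span F (Set.range A) with hCdef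
  have key : ∀ X : Set (Fin m), dualNullity A X = Module.finrank F ↥(C ⊓ kerProj F X) :=
    fun X => dualNullity_eq_finrank A hk X
  set S1 := {n | ∃ D : Submodule F (Fin m → F), D ≤ C ∧ Module.finrank F D = r ∧
    (codeSupport D).ncard = n} with hS1
  set S2 := {n | ∃ X : Set (Fin m), r ≤ dualNullity A X ∧ X.ncard = n} with hS2
  -- any D ≤ C of rank r gives its support in S2
  have hsupp_ker : ∀ D : Submodule F (Fin m → F), D ≤ kerProj F (codeSupport D) := by
    intro D v hv
    rw [mem_kerProj]
    intro j hj
    by_contra h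
    exact hj.2 ⟨v, hv, h⟩
  have hS1sub : S1 ⊆ S2 := by
    rintro n ⟨D, hDC, hDr, rfl⟩
    refine ⟨codeSupport D, ?_, rfl⟩
    rw [key]
    rw [← hDr]
    exact Submodule.finrank_mono (le_inf hDC (hsupp_ker D))
  -- S1 is nonempty
  have hS1ne : S1.Nonempty := by
    obtain ⟨D, hDC, hDr⟩ := exists_le_finrank_eq C (hk ▸ hrk)
    exact ⟨(codeSupport D).ncard, D, hDC, hDr, rfl⟩
  have hGHW : GHW C r = sInf S1 := rfl
  rw [hGHW]
  apply le_antisymm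
  · -- sInf S1 ≤ sInf S2
    have hS2ne : S2.Nonempty := hS1ne.mono hS1sub
    obtain ⟨X, hX, hXn⟩ := Nat.sInf_mem hS2ne
    rw [key] at hX
    obtain ⟨D, hD, hDr⟩ := exists_le_finrank_eq (C ⊓ kerProj F X) hX
    have hsub : codeSupport D ⊆ X := by
      intro i hi
      obtain ⟨v, hv, hvi⟩ := hi
      by_contra h
      exact hvi (mem_kerProj.mp ((hD hv).2) i ⟨trivial, h⟩)
    calc sInf S1 ≤ (codeSupport D).ncard :=
          Nat.sInf_le ⟨D, le_trans hD inf_le_left, hDr, rfl⟩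
      _ ≤ X.ncard := Set.ncard_le_ncard hsub X.toFinite
      _ = sInf S2 := hXn
  · exact Nat.sInf_le (hS1sub (Nat.sInf_mem hS1ne))
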